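/- Let f be a Boolean function that is not identically 1 and has k pairwise non-overlapping minimal 1-certificates such that each certificate has at most 2 contradictions in total with all the others. Then s_0(f) ≥ k. -/

import Mathlib

open Finset

section Defs

variable {I : Type*} [Fintype I] [DecidableEq I]

/-- Flip a single bit of the input. -/
def flipBit (x : I → Bool) (i : I) : I → Bool := Function.update x i (!(x i))

/-- Flip a block of bits of the input. -/
def flipSet (x : I → Bool) (B : Finset I) : I → Bool := fun j => if j ∈ B then !(x j) else x j

/-- Sensitivity of `f` at input `x`. -/
def sens (f : (I → Bool) → Bool) (x : I → Bool) : ℕ :=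
  (univ.filter fun i => f (flipBit x i) ≠ f x).card

/-- Maximum sensitivity over 0-inputs. -/
noncomputable def s0 (f : (I → Bool) → Bool) : ℕ :=
  (univ.filter fun x => f x = false).sup (sens f)

/-- Maximum sensitivity over 1-inputs. -/
noncomputable def s1 (f : (I → Bool) → Bool) : ℕ :=
  (univ.filter fun x => f x = true).sup (sens f)

/-- There exist `b` pairwise disjoint sensitive blocks for `f` at `x`. -/
def hasBS (f : (I → Bool) → Bool) (x : I → Bool) (b : ℕ) : Prop :=
  ∃ B : Fin b → Finset I, (∀ i j, i ≠ j → Disjoint (B i) (B j)) ∧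
    ∀ i, f (flipSet x (B i)) ≠ f x

/-- Block sensitivity of `f` at `x`. -/
noncomputable def bs (f : (I → Bool) → Bool) (x : I → Bool) : ℕ := sSup {b | hasBS f x b}

/-- Maximum block sensitivity over 0-inputs. -/
noncomputable def bs0 (f : (I → Bool) → Bool) : ℕ :=
  (univ.filter fun x => f x = false).sup (bs f)

/-- `y` agrees with `x` on the set `S`. -/
def agreesOn (S : Finset I) (x y : I → Bool) : Prop := ∀ i ∈ S, y i = x i

/-- The restriction of `x` to `S` forces the value `v`. -/
def IsCertOn (f : (I → Bool) → Bool) (S : Finset I) (x : I → Bool) (v : Bool) : Prop :=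
  ∀ y, agreesOn S x y → f y = v

/-- Minimum size of a certificate of `f` at `x` (for the value `f x`). -/
noncomputable def certSize (f : (I → Bool) → Bool) (x : I → Bool) : ℕ :=
  sInf {m | ∃ S : Finset I, S.card = m ∧ IsCertOn f S x (f x)}

/-- Maximum certificate complexity over 1-inputs. -/
noncomputable def C1 (f : (I → Bool) → Bool) : ℕ :=
  (univ.filter fun x => f x = true).sup (certSize f)

/-- `x` satisfies the partial assignment `c`. -/
def PAsat (c : I → Option Bool) (x : I → Bool) : Prop := ∀ i b, c i = some b → x i = b

/-- The partial assignment `c` is a 1-certificate of `f`. -/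
def IsOneCert (f : (I → Bool) → Bool) (c : I → Option Bool) : Prop :=
  ∀ x, PAsat c x → f x = true

/-- The partial assignment `c` is a minimal 1-certificate of `f`. -/
def IsMinOneCert (f : (I → Bool) → Bool) (c : I → Option Bool) : Prop :=
  IsOneCert f c ∧ ∀ i, c i ≠ none → ¬ IsOneCert f (Function.update c i none)

/-- Number of positions assigned by a partial assignment. -/
def PAsize (c : I → Option Bool) : ℕ := (univ.filter fun i => c i ≠ none).card

/-- Two partial assignments overlap: some position is assigned the same value by both. -/
def Overlap (c d : I → Option Bool) : Prop := ∃ i b, c i = some b ∧ d i = some b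

/-- Number of contradictions between two partial assignments. -/
def contra (c d : I → Option Bool) : ℕ :=
  (univ.filter fun i =>
    (c i = some true ∧ d i = some false) ∨ (c i = some false ∧ d i = some true)).card

end Defs

/-- Total weight of the induced subgraph on `A` (each unordered edge counted once). -/
def gweight {V : Type*} [DecidableEq V] (w : V → V → ℕ) (A : Finset V) : ℚ :=
  (∑ p ∈ A.offDiag, (w p.1 p.2 : ℚ)) / 2

namespace S8
variable {n k : ℕ}

def ends (c : Fin k → Fin n → Option Bool) (p : Fin n) : Finset (Fin k) :=
  Finset.univ.filter fun i => c i p ≠ none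

def isDis (c : Fin k → Fin n → Option Bool) (x : Fin n → Bool) (i : Fin k) (p : Fin n) : Prop :=
  ∃ b, c i p = some b ∧ x p ≠ b

instance (c : Fin k → Fin n → Option Bool) (x : Fin n → Bool) (i : Fin k) (p : Fin n) :
    Decidable (isDis c x i p) := by unfold isDis; infer_instance

def disP (c : Fin k → Fin n → Option Bool) (x : Fin n → Bool) (p : Fin n) : Finset (Fin k) :=
  Finset.univ.filter fun i => isDis c x i p

def disOf (c : Fin k → Fin n → Option Bool) (x : Fin n → Bool) (i : Fin k) : Finset (Fin n) :=
  Finset.univ.filter fun p => isDis c x i p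

def sharedP (c : Fin k → Fin n → Option Bool) : Finset (Fin n) :=
  Finset.univ.filter fun p => 2 ≤ (ends c p).card

def Dw (c : Fin k → Fin n → Option Bool) (x : Fin n → Bool) : ℕ := ∑ p, (disP c x p).card

def Ww (c : Fin k → Fin n → Option Bool) (F : {p // p ∈ sharedP c} → Fin k)
    (x : Fin n → Bool) : ℕ :=
  ((sharedP c).attach.filter fun q => ∃ b, c (F q) q.1 = some b ∧ x q.1 = b).card

def Phi (c : Fin k → Fin n → Option Bool) (F : {p // p ∈ sharedP c} → Fin k)
    (x : Fin n → Bool) : ℕ := (n + 1) * Dw c x + Ww c F x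

end S8

/-- If `f` is not identically 1 and has `k` pairwise non-overlapping minimal
1-certificates, each with at most 2 contradictions in total with all the others,
then `s_0(f) ≥ k`. -/
theorem stmt_8 {n k : ℕ} (f : (Fin n → Bool) → Bool)
    (hne : ¬ ∀ x, f x = true)
    (c : Fin k → Fin n → Option Bool)
    (hmin : ∀ i, IsMinOneCert f (c i))
    (hnov : ∀ i j, i ≠ j → ¬ Overlap (c i) (c j))
    (hcon : ∀ i, ∑ j ∈ Finset.univ.filter (fun j => j ≠ i), contra (c i) (c j) ≤ 2) :
    k ≤ s0 f := by
  classical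
  have bne : ∀ a b : Bool, a ≠ b → a = !b := by decide
  have btot : ∀ a b : Bool, a = b ∨ a = !b := by decide
  -- two distinct certificates assigning the same position assign opposite values
  have hopp : ∀ i j (p : Fin n) b b', i ≠ j → c i p = some b → c j p = some b' → b' = !b := by
    intro i j p b b' hij hb hb'
    rcases btot b' b with hbb | hbb
    · exact absurd ⟨p, b, hb, hbb ▸ hb'⟩ (hnov i j hij)
    · exact hbb
  have hiends : ∀ i (p : Fin n) b, c i p = some b → i ∈ S8.ends c p := by
    intro i p b hb; simp [S8.ends, hb]
  have hendsex : ∀ i (p : Fin n), i ∈ S8.ends c p → ∃ b, c i p = some b := by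
    intro i p hi
    simp only [S8.ends, Finset.mem_filter, Finset.mem_univ, true_and] at hi
    exact Option.ne_none_iff_exists'.mp hi
  -- each position is assigned by at most two certificates
  have hends2 : ∀ p : Fin n, (S8.ends c p).card ≤ 2 := by
    intro p
    by_contra h
    push_neg at h
    obtain ⟨i, j, l, hi, hj, hl, hij, hil, hjl⟩ := Finset.two_lt_card_iff.mp h
    obtain ⟨bi, hbi⟩ := hendsex i p hi
    obtain ⟨bj, hbj⟩ := hendsex j p hj
    obtain ⟨bl, hbl⟩ := hendsex l p hl
    have e1 := hopp i j p bi bj hij hbi hbj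
    have e2 := hopp i l p bi bl hil hbi hbl
    have e3 := hopp j l p bj bl hjl hbj hbl
    rw [e1, e2] at e3
    cases bi <;> simp at e3
  -- each certificate participates in at most two shared positions
  have hsharedOf : ∀ i, ((S8.sharedP c).filter fun p => c i p ≠ none).card ≤ 2 := by
    intro i
    have hsub : ((S8.sharedP c).filter fun p => c i p ≠ none) ⊆
        (Finset.univ.filter (fun j => j ≠ i)).biUnion (fun j => Finset.univ.filter fun p =>
          (c i p = some true ∧ c j p = some false) ∨
          (c i p = some false ∧ c j p = some true)) := by
      intro p hp
      rw [Finset.mem_filter] at hp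
      obtain ⟨hpS, hpi⟩ := hp
      obtain ⟨b, hb⟩ := Option.ne_none_iff_exists'.mp hpi
      have h2le : 2 ≤ (S8.ends c p).card := by
        simpa [S8.sharedP] using hpS
      have : ∃ j ∈ S8.ends c p, j ≠ i := by
        by_contra hno
        push_neg at hno
        have : S8.ends c p ⊆ {i} := fun j hj => Finset.mem_singleton.mpr (hno j hj)
        have := Finset.card_le_card this
        simp at this
        omega
      obtain ⟨j, hj, hji⟩ := this
      obtain ⟨b', hb'⟩ := hendsex j p hj
      have hbb : b' = !b := hopp i j p b b' (Ne.symm hji) hb hb'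
      rw [Finset.mem_biUnion]
      refine ⟨j, by simp [hji], ?_⟩
      simp only [Finset.mem_filter, Finset.mem_univ, true_and]
      subst hbb
      cases b
      · right; exact ⟨hb, hb'⟩
      · left; exact ⟨hb, hb'⟩
    calc ((S8.sharedP c).filter fun p => c i p ≠ none).card
        ≤ _ := Finset.card_le_card hsub
      _ ≤ ∑ j ∈ Finset.univ.filter (fun j => j ≠ i), (Finset.univ.filter fun p =>
          (c i p = some true ∧ c j p = some false) ∨
          (c i p = some false ∧ c j p = some true)).card := Finset.card_biUnion_le
      _ ≤ 2 := hcon i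
  -- Hall's condition and Hall's theorem: pick an injective "head" for the shared positions
  have hall : ∀ s : Finset {p // p ∈ S8.sharedP c},
      s.card ≤ (s.biUnion fun q => S8.ends c q.1).card := by
    intro s
    set B := s.biUnion fun q => S8.ends c q.1 with hB
    have h2 : ∀ q ∈ s, (S8.ends c (Subtype.val q)).card = 2 := by
      intro q _
      refine le_antisymm (hends2 _) ?_
      have hq2 := q.2
      simp only [S8.sharedP, Finset.mem_filter, Finset.mem_univ, true_and] at hq2
      exact hq2
    have e1 : ∑ q ∈ s, (S8.ends c q.1).card
        = ∑ i : Fin k, (s.filter fun q => i ∈ S8.ends c q.1).card := by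
      simp only [Finset.card_filter]
      rw [Finset.sum_comm]
      apply Finset.sum_congr rfl
      intro q _
      simp [Finset.card_filter]
    have e2 : ∑ i : Fin k, (s.filter fun q => i ∈ S8.ends c q.1).card
        = ∑ i ∈ B, (s.filter fun q => i ∈ S8.ends c q.1).card := by
      symm
      apply Finset.sum_subset (Finset.subset_univ B)
      intro i _ hiB
      rw [Finset.card_eq_zero, Finset.filter_eq_empty_iff]
      intro q hq hiq
      exact hiB (Finset.mem_biUnion.mpr ⟨q, hq, hiq⟩)
    have e3 : ∀ i : Fin k, (s.filter fun q => i ∈ S8.ends c q.1).card ≤ 2 := by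
      intro i
      refine le_trans (Finset.card_le_card_of_injOn (fun q => q.1) ?_ ?_) (hsharedOf i)
      · intro q hq
        rw [Finset.mem_coe, Finset.mem_filter] at hq
        rw [Finset.mem_coe, Finset.mem_filter]
        refine ⟨q.2, ?_⟩
        simpa [S8.ends] using hq.2
      · intro a _ b _ hab
        exact Subtype.ext hab
    have : 2 * s.card ≤ 2 * B.card := by
      calc 2 * s.card = ∑ q ∈ s, 2 := by rw [Finset.sum_const, smul_eq_mul, mul_comm]
        _ = ∑ q ∈ s, (S8.ends c q.1).card := Finset.sum_congr rfl fun q hq => (h2 q hq).symm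
        _ = ∑ i ∈ B, (s.filter fun q => i ∈ S8.ends c q.1).card := by rw [e1, e2]
        _ ≤ ∑ i ∈ B, 2 := Finset.sum_le_sum fun i _ => e3 i
        _ = 2 * B.card := by rw [Finset.sum_const, smul_eq_mul, mul_comm]
    omega
  obtain ⟨F, hFinj, hFmem⟩ :=
    (Finset.all_card_le_biUnion_card_iff_exists_injective (fun q : {p // p ∈ S8.sharedP c} =>
      S8.ends c q.1)).mp hall
  -- a zero input exists; take a minimizer of the potential
  obtain ⟨x0, hx0⟩ : ∃ x, f x = false := by
    push_neg at hne
    obtain ⟨x, hx⟩ := hne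
    exact ⟨x, by simpa using hx⟩
  obtain ⟨x, hxmem, hxmin⟩ := Finset.exists_min_image
    (Finset.univ.filter fun y => f y = false) (S8.Phi c F) ⟨x0, by simp [hx0]⟩
  have hx0' : f x = false := by simpa using hxmem
  have hminx : ∀ y, f y = false → S8.Phi c F x ≤ S8.Phi c F y := by
    intro y hy
    exact hxmin y (by simp [hy])
  have hflip_ne : ∀ (p q : Fin n) (z : Fin n → Bool), q ≠ p → flipBit z p q = z q := by
    intro p q z h
    simp [flipBit, Function.update_of_ne h]
  have hflip_self : ∀ (p : Fin n) (z : Fin n → Bool), flipBit z p p = !(z p) := by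
    intro p z; simp [flipBit]
  -- main claim: for every certificate there is a disagreeing position whose flip gives 1
  have main : ∀ i : Fin k, ∃ p, (∃ b, c i p = some b ∧ x p ≠ b) ∧ f (flipBit x p) = true := by
    intro i
    have hTmem : ∀ p, p ∈ S8.disOf c x i ↔ S8.isDis c x i p := by
      intro p; simp [S8.disOf]
    have hTne : (S8.disOf c x i).Nonempty := by
      rw [Finset.nonempty_iff_ne_empty]
      intro hemp
      have hsat : PAsat (c i) x := by
        intro q b hb
        by_contra hq
        have : q ∈ S8.disOf c x i := (hTmem q).2 ⟨b, hb, hq⟩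
        simp [hemp] at this
      have := (hmin i).1 x hsat
      rw [hx0'] at this
      exact Bool.false_ne_true this
    rcases eq_or_lt_of_le (Finset.one_le_card.mpr hTne) with h1 | h2
    · -- exactly one disagreement: flipping it satisfies the certificate
      obtain ⟨p, hp⟩ := Finset.card_eq_one.mp h1.symm
      have hpT : p ∈ S8.disOf c x i := by simp [hp]
      refine ⟨p, (hTmem p).1 hpT, ?_⟩
      apply (hmin i).1
      intro q b hb
      by_cases hq : q = p
      · subst hq
        obtain ⟨b', hb', hxb'⟩ := (hTmem q).1 hpT
        rw [hb] at hb'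
        injection hb' with hb'
        subst hb'
        rw [hflip_self, bne _ _ hxb']
        exact Bool.not_not b
      · rw [hflip_ne p q _ hq]
        by_contra hxq
        have : q ∈ S8.disOf c x i := (hTmem q).2 ⟨b, hb, hxq⟩
        rw [hp] at this
        exact hq (Finset.mem_singleton.mp this)
    · by_cases hpriv : ∃ p ∈ S8.disOf c x i, (S8.ends c p).card ≤ 1
      · -- a private disagreement: flipping it strictly decreases D
        obtain ⟨p, hpT, hp1⟩ := hpriv
        obtain ⟨b, hb, hxb⟩ := (hTmem p).1 hpT
        refine ⟨p, ⟨b, hb, hxb⟩, ?_⟩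
        by_contra hf1
        have hf0 : f (flipBit x p) = false := by
          cases hfv : f (flipBit x p)
          · rfl
          · exact absurd hfv hf1
        set x' := flipBit x p with hx'
        have hendsp : S8.ends c p = {i} := by
          have hi : i ∈ S8.ends c p := hiends i p b hb
          have : S8.ends c p ⊆ {i} := by
            rw [Finset.card_le_one] at hp1
            intro j hj
            rw [Finset.mem_singleton]
            exact hp1 j hj i hi
          exact Finset.Subset.antisymm this (Finset.singleton_subset_iff.mpr hi)
        have hDq : ∀ q : Fin n, q ≠ p → S8.disP c x' q = S8.disP c x q := by
          intro q hq
          apply Finset.filter_congr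
          intro j _
          simp [S8.isDis, hx', hflip_ne p q x hq]
        have hDp' : S8.disP c x' p = ∅ := by
          rw [Finset.eq_empty_iff_forall_notMem]
          intro j hj
          rw [S8.disP, Finset.mem_filter] at hj
          obtain ⟨-, b', hb', hxb'⟩ := hj
          have hjp : j ∈ S8.ends c p := hiends j p b' hb'
          rw [hendsp, Finset.mem_singleton] at hjp
          subst hjp
          rw [hb] at hb'
          injection hb' with hb'
          subst hb'
          rw [hx', hflip_self, bne _ _ hxb] at hxb'
          exact hxb' (Bool.not_not b)
        have hDp : 0 < (S8.disP c x p).card := by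
          rw [Finset.card_pos]
          refine ⟨i, ?_⟩
          simp only [S8.disP, Finset.mem_filter, Finset.mem_univ, true_and]
          exact ⟨b, hb, hxb⟩
        have hD : S8.Dw c x' < S8.Dw c x := by
          apply Finset.sum_lt_sum
          · intro q _
            by_cases hq : q = p
            · subst hq; rw [hDp']; simp
            · rw [hDq q hq]
          · exact ⟨p, Finset.mem_univ p, by rw [hDp']; simpa using hDp⟩
        have hW : S8.Ww c F x' = S8.Ww c F x := by
          unfold S8.Ww
          congr 1
          apply Finset.filter_congr
          intro q _
          have hqp : q.1 ≠ p := by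
            intro h
            have := q.2
            rw [h] at this
            simp only [S8.sharedP, Finset.mem_filter, Finset.mem_univ, true_and] at this
            rw [hendsp] at this
            simp at this
          simp [hx', hflip_ne p q.1 x hqp]
        have hlt : S8.Phi c F x' < S8.Phi c F x := by
          unfold S8.Phi
          rw [hW]
          have : (n + 1) * S8.Dw c x' < (n + 1) * S8.Dw c x :=
            mul_lt_mul_of_pos_left hD (Nat.succ_pos n)
          omega
        exact absurd (hminx x' hf0) (by omega)
      · -- all disagreements shared: exactly two of them, flip one whose head is another cert
        push_neg at hpriv
        have hTsub : S8.disOf c x i ⊆ (S8.sharedP c).filter fun p => c i p ≠ none := by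
          intro p hp
          obtain ⟨b, hb, -⟩ := (hTmem p).1 hp
          rw [Finset.mem_filter]
          refine ⟨?_, by simp [hb]⟩
          simp only [S8.sharedP, Finset.mem_filter, Finset.mem_univ, true_and]
          exact hpriv p hp
        have hT2 : (S8.disOf c x i).card = 2 :=
          le_antisymm ((Finset.card_le_card hTsub).trans (hsharedOf i)) h2
        obtain ⟨p, q, hpq, hTpq⟩ := Finset.card_eq_two.mp hT2
        have hpT : p ∈ S8.disOf c x i := by simp [hTpq]
        have hqT : q ∈ S8.disOf c x i := by simp [hTpq]
        have hpS : p ∈ S8.sharedP c := (Finset.mem_filter.mp (hTsub hpT)).1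
        have hqS : q ∈ S8.sharedP c := (Finset.mem_filter.mp (hTsub hqT)).1
        have hex : ∃ r, ∃ hr : r ∈ S8.sharedP c, r ∈ S8.disOf c x i ∧ F ⟨r, hr⟩ ≠ i := by
          by_cases hFp : F ⟨p, hpS⟩ = i
          · refine ⟨q, hqS, hqT, ?_⟩
            intro hFq
            have : (⟨p, hpS⟩ : {p // p ∈ S8.sharedP c}) = ⟨q, hqS⟩ :=
              hFinj (hFp.trans hFq.symm)
            exact hpq (congrArg Subtype.val this)
          · exact ⟨p, hpS, hpT, hFp⟩
        obtain ⟨r, hrS, hrT, hFr⟩ := hex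
        obtain ⟨b, hb, hxb⟩ := (hTmem r).1 hrT
        set j := F ⟨r, hrS⟩ with hj
        have hjend : j ∈ S8.ends c r := hFmem _
        obtain ⟨b', hb'⟩ := hendsex j r hjend
        have hbb : b' = !b := hopp i j r b b' (Ne.symm hFr) hb hb'
        have hxr : x r = b' := by
          rw [hbb]
          exact bne _ _ hxb
        refine ⟨r, ⟨b, hb, hxb⟩, ?_⟩
        by_contra hf1
        have hf0 : f (flipBit x r) = false := by
          cases hfv : f (flipBit x r)
          · rfl
          · exact absurd hfv hf1
        set x' := flipBit x r with hx'
        have hx'r : x' r = b := by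
          rw [hx', hflip_self, bne _ _ hxb]
          exact Bool.not_not b
        have hendsr : S8.ends c r = {i, j} := by
          refine (Finset.eq_of_subset_of_card_le ?_ ?_).symm
          · intro t ht
            rcases Finset.mem_insert.mp ht with h | h
            · exact h ▸ hiends i r b hb
            · rw [Finset.mem_singleton] at h; exact h ▸ hjend
          · rw [Finset.card_insert_of_notMem (by simp [Ne.symm hFr]), Finset.card_singleton]
            exact hends2 r
        have hDq : ∀ s : Fin n, s ≠ r → S8.disP c x' s = S8.disP c x s := by
          intro s hs
          apply Finset.filter_congr
          intro t _
          simp [S8.isDis, hx', hflip_ne r s x hs]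
        have hDr : S8.disP c x r = {i} := by
          apply Finset.Subset.antisymm
          · intro t ht
            rw [S8.disP, Finset.mem_filter] at ht
            obtain ⟨-, bt, hbt, hxbt⟩ := ht
            have : t ∈ S8.ends c r := hiends t r bt hbt
            rw [hendsr] at this
            rcases Finset.mem_insert.mp this with h | h
            · simp [h]
            · rw [Finset.mem_singleton] at h
              subst h
              rw [hb'] at hbt
              injection hbt with hbt
              subst hbt
              exact absurd hxr hxbt
          · intro t ht
            rw [Finset.mem_singleton] at ht
            subst ht
            simp only [S8.disP, Finset.mem_filter, Finset.mem_univ, true_and]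
            exact ⟨b, hb, hxb⟩
        have hDr' : S8.disP c x' r = {j} := by
          apply Finset.Subset.antisymm
          · intro t ht
            rw [S8.disP, Finset.mem_filter] at ht
            obtain ⟨-, bt, hbt, hxbt⟩ := ht
            have : t ∈ S8.ends c r := hiends t r bt hbt
            rw [hendsr] at this
            rcases Finset.mem_insert.mp this with h | h
            · subst h
              rw [hb] at hbt
              injection hbt with hbt
              subst hbt
              exact absurd hx'r hxbt
            · exact h
          · intro t ht
            rw [Finset.mem_singleton] at ht
            subst ht
            simp only [S8.disP, Finset.mem_filter, Finset.mem_univ, true_and]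
            refine ⟨b', hb', ?_⟩
            rw [hx'r, hbb]
            cases b <;> simp
        have hD : S8.Dw c x' = S8.Dw c x := by
          apply Finset.sum_congr rfl
          intro s _
          by_cases hs : s = r
          · rw [hs, hDr', hDr]; simp
          · rw [hDq s hs]
        have hW : S8.Ww c F x' < S8.Ww c F x := by
          apply Finset.card_lt_card
          rw [Finset.ssubset_iff_of_subset]
          · refine ⟨⟨r, hrS⟩, ?_, ?_⟩
            · rw [Finset.mem_filter]
              exact ⟨Finset.mem_attach _ _, b', hb', hxr⟩
            · rw [Finset.mem_filter]
              rintro ⟨-, b0, hb0, hxb0⟩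
              rw [← hj] at hb0
              rw [hb'] at hb0
              injection hb0 with hb0
              subst hb0
              rw [hx'r, hbb] at hxb0
              exact absurd hxb0 (by cases b <;> simp)
          · intro t ht
            rw [Finset.mem_filter] at ht ⊢
            obtain ⟨hta, b0, hb0, hxb0⟩ := ht
            refine ⟨hta, b0, hb0, ?_⟩
            by_cases htr : t.1 = r
            · exfalso
              have : t = ⟨r, hrS⟩ := Subtype.ext htr
              subst this
              rw [← hj] at hb0
              rw [hb'] at hb0
              injection hb0 with hb0
              subst hb0
              rw [hx'r, hbb] at hxb0
              exact absurd hxb0 (by cases b <;> simp)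
            · rw [hx', hflip_ne r t.1 x htr] at hxb0
              exact hxb0
        have hlt : S8.Phi c F x' < S8.Phi c F x := by
          unfold S8.Phi
          rw [hD]
          omega
        exact absurd (hminx x' hf0) (by omega)
  -- assemble the injection into sensitive positions
  choose σ hσd hσ1 using main
  have hinj : Function.Injective σ := by
    intro i j hij
    by_contra hne'
    obtain ⟨bi, hbi, hxi⟩ := hσd i
    obtain ⟨bj, hbj, hxj⟩ := hσd j
    rw [hij] at hbi hxi
    have hbb : bi = bj := by
      have e1 := bne _ _ hxi
      have e2 := bne _ _ hxj
      exact Bool.not_inj (e1.symm.trans e2)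
    exact hnov i j hne' ⟨σ j, bi, hbi, hbb ▸ hbj⟩
  have hsens : k ≤ sens f x := by
    have : k = (Finset.univ : Finset (Fin k)).card := by simp
    rw [this, sens]
    apply Finset.card_le_card_of_injOn σ
    · intro i _
      simp only [Finset.mem_coe, Finset.mem_filter, Finset.mem_univ, true_and]
      rw [hσ1 i, hx0']
      simp
    · exact hinj.injOn
  have hxf : x ∈ Finset.univ.filter fun y => f y = false := by simp [hx0']
  exact hsens.trans (Finset.le_sup hxf)
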